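/- Let p > 2 be prime and q an integer-valued quadratic form on a free ℤ_p-module L of rank 2. Then there exists a basis e₁, e₂ of L, units u, v ∈ ℤ_p^×, and integers 0 ≤ a ≤ b such that q(x e₁ + y e₂) = u p^a x² + v p^b y² for all x, y ∈ ℤ_p. -/

import Mathlib

open QuadraticMap

variable {p : ℕ} [hp : Fact p.Prime]

private lemma padic_val_le {a b : ℤ_[p]} (ha : a ≠ 0) (hb : b ≠ 0) (h : ‖b‖ ≤ ‖a‖) :
    a.valuation ≤ b.valuation := by
  have h1 : (1 : ℝ) < p := by exact_mod_cast hp.1.one_lt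
  rw [PadicInt.norm_eq_zpow_neg_valuation ha, PadicInt.norm_eq_zpow_neg_valuation hb,
    (zpow_right_strictMono₀ h1).le_iff_le] at h
  omega

private lemma padic_dvd_of_norm_le {a b : ℤ_[p]} (ha : a ≠ 0) (h : ‖b‖ ≤ ‖a‖) : a ∣ b := by
  rcases eq_or_ne b 0 with rfl | hb
  · exact dvd_zero a
  have hval := padic_val_le ha hb h
  have hle : a.valuation ≤ b.valuation := by
    omega
  rw [PadicInt.unitCoeff_spec ha, PadicInt.unitCoeff_spec hb]
  exact mul_dvd_mul ((PadicInt.unitCoeff ha).isUnit.dvd) (pow_dvd_pow _ hle)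

private lemma qexp (q : QuadraticForm ℤ_[p] (Fin 2 → ℤ_[p])) (x y : ℤ_[p])
    (v w : Fin 2 → ℤ_[p]) :
    q (x • v + y • w) = x ^ 2 * q v + y ^ 2 * q w + (x * y) * polar ⇑q v w := by
  have h : q (x • v + y • w) = q (x • v) + q (y • w) + polar ⇑q (x • v) (y • w) := by
    simp [QuadraticMap.polar]
  rw [h, QuadraticMap.map_smul, QuadraticMap.map_smul, polar_smul_left, polar_smul_right]
  simp only [smul_eq_mul]
  ring

private lemma main_aux (hp2 : 2 < p) (q : QuadraticForm ℤ_[p] (Fin 2 → ℤ_[p]))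
    (hnd : ∀ x : Fin 2 → ℤ_[p],
      (∀ y : Fin 2 → ℤ_[p], QuadraticMap.polar (⇑q) x y = 0) → x = 0)
    (w w' : Fin 2 → ℤ_[p]) (hdet : IsUnit (w 0 * w' 1 - w' 0 * w 1))
    (hα : q w ≠ 0) (hP : ‖polar ⇑q w w'‖ ≤ ‖q w‖) (hq' : ‖q w'‖ ≤ ‖q w‖) :
    ∃ (e : Module.Basis (Fin 2) ℤ_[p] (Fin 2 → ℤ_[p])) (u v : ℤ_[p]ˣ) (a b : ℕ),
      a ≤ b ∧
      ∀ x y : ℤ_[p],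
        q (x • e 0 + y • e 1) =
          (u : ℤ_[p]) * (p : ℤ_[p]) ^ a * x ^ 2 +
            (v : ℤ_[p]) * (p : ℤ_[p]) ^ b * y ^ 2 := by
  have h2 : IsUnit (2 : ℤ_[p]) := by
    rw [PadicInt.isUnit_iff]
    have h1 : ‖(2 : ℤ_[p])‖ ≤ 1 := PadicInt.norm_le_one _
    have h2' : ¬ ‖((2 : ℤ) : ℤ_[p])‖ < 1 := by
      rw [PadicInt.norm_int_lt_one_iff_dvd]
      intro hdvd
      have := Int.le_of_dvd (by norm_num) hdvd
      omega
    push_cast at h2'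
    linarith
  have h2α : (2 : ℤ_[p]) * q w ≠ 0 := mul_ne_zero h2.ne_zero hα
  have h2αn : ‖(2 : ℤ_[p]) * q w‖ = ‖q w‖ := by
    rw [norm_mul, PadicInt.isUnit_iff.mp h2, one_mul]
  obtain ⟨c, hc⟩ := padic_dvd_of_norm_le h2α (h2αn.symm ▸ hP)
  set f : Fin 2 → ℤ_[p] := w' - c • w with hf
  have hpf : polar ⇑q w f = 0 := by
    rw [hf, polar_sub_right, polar_smul_right, polar_self, smul_eq_mul, hc]
    push_cast [nsmul_eq_mul]
    ring
  set M : Matrix (Fin 2) (Fin 2) ℤ_[p] := Matrix.of ![![w 0, f 0], ![w 1, f 1]] with hM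
  have hdetM : IsUnit M.det := by
    have : M.det = w 0 * w' 1 - w' 0 * w 1 := by
      simp [hM, Matrix.det_fin_two, hf]
      ring
    rw [this]; exact hdet
  have hInv : Invertible M := M.invertibleOfIsUnitDet hdetM
  set e : Module.Basis (Fin 2) ℤ_[p] (Fin 2 → ℤ_[p]) :=
    (Pi.basisFun ℤ_[p] (Fin 2)).map (M.toLinearEquiv' hInv) with he
  have he0 : e 0 = w := by
    funext i
    fin_cases i <;>
      simp [he, hM, Matrix.toLinearEquiv', Matrix.mulVec, dotProduct, Fin.sum_univ_two]
  have he1 : e 1 = f := by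
    funext i
    fin_cases i <;>
      simp [he, hM, Matrix.toLinearEquiv', Matrix.mulVec, dotProduct, Fin.sum_univ_two]
  have hqf : q f ≠ 0 := by
    intro h0
    have hff : polar ⇑q f f = 0 := by rw [polar_self, h0, smul_zero]
    have hfw : polar ⇑q f w = 0 := by rw [polar_comm]; exact hpf
    have hz : f = 0 := by
      apply hnd
      intro y
      have hy := Module.Basis.sum_repr e y
      rw [Fin.sum_univ_two, he0, he1] at hy
      rw [← hy, polar_add_right, polar_smul_right, polar_smul_right, smul_eq_mul, smul_eq_mul,
        hfw, hff]
      ring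
    exact e.ne_zero 1 (he1.trans hz)
  have hfval : q f = q w' + c ^ 2 * q w - c * polar ⇑q w w' := by
    have hfeq : (1 : ℤ_[p]) • w' + (-c) • w = f := by
      rw [hf]; module
    have h := qexp q 1 (-c) w' w
    rw [hfeq, polar_comm] at h
    rw [h]; ring
  have hqfn : ‖q f‖ ≤ ‖q w‖ := by
    rw [hfval, sub_eq_add_neg]
    refine le_trans (PadicInt.nonarchimedean _ _) (max_le (le_trans (PadicInt.nonarchimedean _ _)
      (max_le hq' ?_)) ?_)
    · rw [norm_mul]
      exact mul_le_of_le_one_left (norm_nonneg _)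
        (by calc ‖c ^ 2‖ ≤ 1 := PadicInt.norm_le_one _)
    · rw [norm_neg, norm_mul]
      calc ‖c‖ * ‖polar ⇑q w w'‖ ≤ 1 * ‖q w‖ :=
            mul_le_mul (PadicInt.norm_le_one _) hP (norm_nonneg _) zero_le_one
        _ = ‖q w‖ := one_mul _
  have hab : (q w).valuation ≤ (q f).valuation := by
    have hv := padic_val_le hα hqf hqfn
    omega
  refine ⟨e, PadicInt.unitCoeff hα, PadicInt.unitCoeff hqf, _, _, hab, fun x y => ?_⟩
  rw [he0, he1, qexp, hpf]
  conv_lhs => rw [show q w = _ from PadicInt.unitCoeff_spec hα,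
    show q f = _ from PadicInt.unitCoeff_spec hqf]
  ring

private lemma case3 (hp2 : 2 < p) (q : QuadraticForm ℤ_[p] (Fin 2 → ℤ_[p]))
    (hnd : ∀ x : Fin 2 → ℤ_[p],
      (∀ y : Fin 2 → ℤ_[p], QuadraticMap.polar (⇑q) x y = 0) → x = 0)
    (hAC : ‖q ![1, 0]‖ < ‖polar ⇑q ![1, 0] ![0, 1]‖)
    (hBC : ‖q ![0, 1]‖ < ‖polar ⇑q ![1, 0] ![0, 1]‖) :
    ∃ (e : Module.Basis (Fin 2) ℤ_[p] (Fin 2 → ℤ_[p])) (u v : ℤ_[p]ˣ) (a b : ℕ),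
      a ≤ b ∧
      ∀ x y : ℤ_[p],
        q (x • e 0 + y • e 1) =
          (u : ℤ_[p]) * (p : ℤ_[p]) ^ a * x ^ 2 +
            (v : ℤ_[p]) * (p : ℤ_[p]) ^ b * y ^ 2 := by
  set A := q ![1, 0] with hA
  set B := q ![0, 1] with hB
  set C := polar ⇑q ![1, 0] ![0, 1] with hC
  have hsub : ∀ x y : ℤ_[p], ‖x - y‖ ≤ max ‖x‖ ‖y‖ := fun x y => by
    rw [sub_eq_add_neg]
    exact (PadicInt.nonarchimedean _ _).trans (by rw [norm_neg])
  have hsum : (![1, 1] : Fin 2 → ℤ_[p]) = ![1, 0] + ![0, 1] := by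
    funext i; fin_cases i <;> simp
  have hqw : q ![1, 1] = A + B + C := by
    rw [hsum]
    have h : q (![1, 0] + ![0, 1]) = q ![1, 0] + q ![0, 1] + polar ⇑q ![1, 0] ![0, 1] := by
      simp [QuadraticMap.polar]
    rw [h, ← hA, ← hB, ← hC]
  have hCle : ‖C‖ ≤ ‖q ![1, 1]‖ := by
    have hCeq : C = q ![1, 1] - A - B := by rw [hqw]; ring
    have h1 : ‖C‖ ≤ max (max ‖q ![1, 1]‖ ‖A‖) ‖B‖ := by
      rw [hCeq]; exact (hsub _ _).trans (max_le_max (hsub _ _) le_rfl)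
    by_contra hlt
    push_neg at hlt
    exact absurd (h1.trans_lt (max_lt (max_lt hlt hAC) hBC)) (lt_irrefl _)
  have hαne : q ![1, 1] ≠ 0 := by
    intro h0
    rw [h0, norm_zero] at hCle
    have hC0 : C = 0 := norm_le_zero_iff.mp hCle
    rw [hC0, norm_zero] at hAC
    exact (norm_nonneg A).not_gt hAC
  have hPval : polar ⇑q ![1, 1] ![0, 1] = C + (B + B) := by
    rw [hsum, polar_add_left, polar_self, ← hC, ← hB, two_nsmul]
  have hPle : ‖polar ⇑q ![1, 1] ![0, 1]‖ ≤ ‖q ![1, 1]‖ := by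
    rw [hPval]
    refine le_trans (PadicInt.nonarchimedean _ _) (max_le hCle ?_)
    exact (PadicInt.nonarchimedean _ _).trans (by rw [max_self]; exact hBC.le.trans hCle)
  refine main_aux hp2 q hnd ![1, 1] ![0, 1] (by norm_num) hαne hPle ?_
  rw [← hB]
  exact hBC.le.trans hCle

theorem quadratic_form_diagonalization_padic (p : ℕ) [Fact p.Prime] (hp : 2 < p)
    (q : QuadraticForm ℤ_[p] (Fin 2 → ℤ_[p]))
    (hnd : ∀ x : Fin 2 → ℤ_[p],
      (∀ y : Fin 2 → ℤ_[p], QuadraticMap.polar (⇑q) x y = 0) → x = 0) :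
    ∃ (e : Module.Basis (Fin 2) ℤ_[p] (Fin 2 → ℤ_[p])) (u v : ℤ_[p]ˣ) (a b : ℕ),
      a ≤ b ∧
      ∀ x y : ℤ_[p],
        q (x • e 0 + y • e 1) =
          (u : ℤ_[p]) * (p : ℤ_[p]) ^ a * x ^ 2 +
            (v : ℤ_[p]) * (p : ℤ_[p]) ^ b * y ^ 2 := by
  set A := q ![1, 0] with hA
  set B := q ![0, 1] with hB
  set C := polar ⇑q ![1, 0] ![0, 1] with hC
  have hdecomp : ∀ y : Fin 2 → ℤ_[p], y = y 0 • ![1, 0] + y 1 • ![0, 1] := by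
    intro y; funext i; fin_cases i <;> simp
  have hne0 : (![1, 0] : Fin 2 → ℤ_[p]) ≠ 0 := fun h => by simpa using congrFun h 0
  have hne1 : (![0, 1] : Fin 2 → ℤ_[p]) ≠ 0 := fun h => by simpa using congrFun h 1
  rcases le_total ‖B‖ ‖A‖ with hBA | hAB
  · rcases le_or_gt ‖C‖ ‖A‖ with hCA | hAC
    · -- diagonal entry A dominates
      have hAne : A ≠ 0 := by
        intro h0
        have hC0 : C = 0 := by
          rw [h0, norm_zero] at hCA
          exact norm_le_zero_iff.mp hCA
        apply hne0
        apply hnd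
        intro y
        rw [hdecomp y, polar_add_right, polar_smul_right, polar_smul_right, polar_self,
          ← hC, hC0, ← hA, h0]
        simp
      exact main_aux hp q hnd ![1, 0] ![0, 1] (by norm_num)
        (by rw [← hA]; exact hAne) (by rw [← hC, ← hA]; exact hCA) (by rw [← hB, ← hA]; exact hBA)
    · exact case3 hp q hnd (by rw [← hA, ← hC]; exact hAC)
        (by rw [← hB, ← hC]; exact hBA.trans_lt hAC)
  · rcases le_or_gt ‖C‖ ‖B‖ with hCB | hBC
    · -- diagonal entry B dominates
      have hBne : B ≠ 0 := by
        intro h0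
        have hC0 : C = 0 := by
          rw [h0, norm_zero] at hCB
          exact norm_le_zero_iff.mp hCB
        apply hne1
        apply hnd
        intro y
        rw [hdecomp y, polar_add_right, polar_smul_right, polar_smul_right, polar_self,
          polar_comm, ← hC, hC0, ← hB, h0]
        simp
      refine main_aux hp q hnd ![0, 1] ![1, 0] (by norm_num)
        (by rw [← hB]; exact hBne) ?_ (by rw [← hA, ← hB]; exact hAB)
      rw [polar_comm, ← hC, ← hB]
      exact hCB
    · exact case3 hp q hnd (by rw [← hA, ← hC]; exact hAB.trans_lt hBC)
        (by rw [← hB, ← hC]; exact hBC)
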